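/- Let (Ω, ℙ) be a probability space, d ∈ ℕ, γ ∈ (0,1), U_R ≥ 0 and C_Y ≥ 0. Let T : Ω → ℕ be a random variable with ℙ(T = t) = (1 − γ^{1/2})·γ^{t/2} for every t ∈ ℕ. Let (R_t)_{t∈ℕ} be real-valued random variables with |R_t| ≤ U_R almost surely for every t, and let (Y_t)_{t∈ℕ} be ℝ^d-valued random vectors with 𝔼‖Y_t‖ ≤ C_Y for every t. Assume T is independent of the σ-algebra generated by the full sequence ((R_t)_{t∈ℕ}, (Y_t)_{t∈ℕ}). Then: (i) the random vector ĝ := Σ_{t=0}^{T} γ^{t/2} R_t (Σ_{τ=0}^{t} Y_τ) is integrable; (ii) for each τ ∈ ℕ the series Q_τ := Σ_{t=τ}^{∞} γ^{t−τ} R_t converges absolutely almost surely with |Q_τ| ≤ U_R/(1−γ); (iii) the series Σ_{τ=0}^{∞} γ^{τ} 𝔼[Q_τ · Y_τ] converges absolutely; and (iv) 𝔼[ĝ] = Σ_{τ=0}^{∞} γ^{τ} 𝔼[Q_τ · Y_τ]. -/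

import Mathlib

open MeasureTheory ProbabilityTheory

lemma aux_indepFun {Ω β γ' : Type*} {mΩ : MeasurableSpace Ω} [MeasurableSpace β]
    [MeasurableSpace γ'] {μ : Measure Ω} {m₁ m₂ : MeasurableSpace Ω} {f : Ω → β} {g : Ω → γ'}
    (h : Indep m₁ m₂ μ) (hf : Measurable[m₁] f) (hg : Measurable[m₂] g) : IndepFun f g μ :=
  indep_of_indep_of_le_left (indep_of_indep_of_le_right h hg.comap_le) hf.comap_le

lemma aux_integral_smul_indep {Ω : Type*} {mΩ : MeasurableSpace Ω} {P : Measure Ω}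
    [IsProbabilityMeasure P] {d : ℕ} {f : Ω → ℝ} {g : Ω → EuclideanSpace ℝ (Fin d)}
    (h : IndepFun f g P) (hfi : Integrable f P) (hgi : Integrable g P)
    (hfgi : Integrable (fun ω => f ω • g ω) P) :
    ∫ ω, f ω • g ω ∂P = (∫ ω, f ω ∂P) • ∫ ω, g ω ∂P := by
  apply PiLp.ext
  intro i
  set L : EuclideanSpace ℝ (Fin d) →L[ℝ] ℝ := EuclideanSpace.proj i with hL
  have h1 : (∫ ω, f ω • g ω ∂P) i = ∫ ω, f ω * g ω i ∂P := by
    have := L.integral_comp_comm hfgi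
    simpa [hL, EuclideanSpace.coe_proj, PiLp.smul_apply, smul_eq_mul] using this.symm
  have h2 : (∫ ω, g ω ∂P) i = ∫ ω, g ω i ∂P := by
    have := L.integral_comp_comm hgi
    simpa [hL, EuclideanSpace.coe_proj] using this.symm
  have hind : IndepFun f (fun ω => g ω i) P := by
    have := h.comp (measurable_id (α := ℝ)) L.measurable
    exact this
  have hgint : Integrable (fun ω => g ω i) P := by
    have := L.integrable_comp hgi
    simpa [hL, EuclideanSpace.coe_proj] using this
  rw [PiLp.smul_apply, h1, h2, smul_eq_mul]
  exact hind.integral_fun_mul_eq_mul_integral hfi.aestronglyMeasurable hgint.aestronglyMeasurable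

set_option maxHeartbeats 1000000 in
/-- Unbiasedness of the random-horizon policy gradient estimator (abstract form of the
paper's Lemma 1).  `T ~ Geom(1-γ^{1/2})` is independent of the sequence `((R_t),(Y_t))`,
the rewards are bounded by `U_R`, and the score terms `Y_t` have first moment at most `C_Y`.
Then the estimator `ĝ = Σ_{t=0}^{T} γ^{t/2} R_t (Σ_{τ≤t} Y_τ)` is integrable; for each τ
the tail series `Q_τ = Σ_{t≥τ} γ^{t-τ} R_t` converges absolutely a.s. with `|Q_τ| ≤ U_R/(1-γ)`;
the series `Σ_τ γ^τ 𝔼[Q_τ • Y_τ]` converges absolutely; and `𝔼[ĝ] = Σ_τ γ^τ 𝔼[Q_τ • Y_τ]`. -/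
theorem stmt1 {Ω : Type*} [MeasurableSpace Ω] (P : Measure Ω) [IsProbabilityMeasure P]
    (d : ℕ) (γ UR CY : ℝ) (hγ : γ ∈ Set.Ioo (0 : ℝ) 1) (hUR : 0 ≤ UR) (hCY : 0 ≤ CY)
    (T : Ω → ℕ) (hT : Measurable T)
    (hTdist : ∀ t : ℕ, P {ω | T ω = t} = ENNReal.ofReal ((1 - Real.sqrt γ) * Real.sqrt γ ^ t))
    (R : ℕ → Ω → ℝ) (hRm : ∀ t, Measurable (R t)) (hRb : ∀ t, ∀ᵐ ω ∂P, |R t ω| ≤ UR)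
    (Y : ℕ → Ω → EuclideanSpace ℝ (Fin d)) (hYm : ∀ t, Measurable (Y t))
    (hYint : ∀ t, Integrable (Y t) P) (hYb : ∀ t, ∫ ω, ‖Y t ω‖ ∂P ≤ CY)
    (hindep : Indep (MeasurableSpace.comap T inferInstance)
      (⨆ t : ℕ, (MeasurableSpace.comap (R t) inferInstance ⊔
        MeasurableSpace.comap (Y t) inferInstance)) P) :
    Integrable (fun ω => ∑ t ∈ Finset.range (T ω + 1),
        (Real.sqrt γ ^ t * R t ω) • ∑ τ ∈ Finset.range (t + 1), Y τ ω) P ∧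
    (∀ τ : ℕ, ∀ᵐ ω ∂P, Summable (fun n : ℕ => |γ ^ n * R (τ + n) ω|) ∧
        |∑' n : ℕ, γ ^ n * R (τ + n) ω| ≤ UR / (1 - γ)) ∧
    Summable (fun τ : ℕ =>
        ‖γ ^ τ • ∫ ω, (∑' n : ℕ, γ ^ n * R (τ + n) ω) • Y τ ω ∂P‖) ∧
    (∫ ω, ∑ t ∈ Finset.range (T ω + 1),
        (Real.sqrt γ ^ t * R t ω) • ∑ τ ∈ Finset.range (t + 1), Y τ ω ∂P)
      = ∑' τ : ℕ, γ ^ τ • ∫ ω, (∑' n : ℕ, γ ^ n * R (τ + n) ω) • Y τ ω ∂P := by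
  obtain ⟨hγ0, hγ1⟩ := hγ
  set s : ℝ := Real.sqrt γ with hsdef
  have hs0 : 0 < s := Real.sqrt_pos.mpr hγ0
  have hss : s * s = γ := Real.mul_self_sqrt hγ0.le
  have hs1 : s < 1 := by nlinarith
  have hst : ∀ t : ℕ, s ^ t * s ^ t = γ ^ t := fun t => by rw [← mul_pow, hss]
  have h1γ : (0:ℝ) < 1 - γ := by linarith
  -- geometric summability facts
  have hgeo : Summable (fun n : ℕ => γ ^ n) := summable_geometric_of_lt_one hγ0.le hγ1
  have hgeo1 : Summable (fun t : ℕ => ((t : ℝ) + 1) * γ ^ t) := by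
    have h1 : Summable (fun t : ℕ => (t : ℝ) ^ 1 * γ ^ t) :=
      summable_pow_mul_geometric_of_norm_lt_one 1
        (by rwa [Real.norm_eq_abs, abs_of_pos hγ0])
    exact (h1.add hgeo).congr (fun t => by ring)
  -- Part (ii)
  have hpart2 : ∀ τ : ℕ, ∀ᵐ ω ∂P, Summable (fun n : ℕ => |γ ^ n * R (τ + n) ω|) ∧
      |∑' n : ℕ, γ ^ n * R (τ + n) ω| ≤ UR / (1 - γ) := by
    intro τ
    have hall : ∀ᵐ ω ∂P, ∀ n : ℕ, |R (τ + n) ω| ≤ UR := ae_all_iff.mpr fun n => hRb (τ + n)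
    filter_upwards [hall] with ω hω
    have hb : ∀ n : ℕ, |γ ^ n * R (τ + n) ω| ≤ UR * γ ^ n := by
      intro n
      rw [abs_mul, abs_pow, abs_of_pos hγ0, mul_comm]
      exact mul_le_mul_of_nonneg_right (hω n) (pow_nonneg hγ0.le n)
    have hsumg : Summable (fun n : ℕ => UR * γ ^ n) := hgeo.mul_left UR
    have hsum : Summable fun n => |γ ^ n * R (τ + n) ω| :=
      Summable.of_nonneg_of_le (fun n => abs_nonneg _) hb hsumg
    refine ⟨hsum, ?_⟩
    have habs : |∑' n, γ ^ n * R (τ + n) ω| ≤ ∑' n, |γ ^ n * R (τ + n) ω| := by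
      have := norm_tsum_le_tsum_norm (f := fun n => γ ^ n * R (τ + n) ω)
        (by simpa only [Real.norm_eq_abs] using hsum)
      simpa only [Real.norm_eq_abs] using this
    calc |∑' n, γ ^ n * R (τ + n) ω| ≤ ∑' n, |γ ^ n * R (τ + n) ω| := habs
      _ ≤ ∑' n, UR * γ ^ n := Summable.tsum_le_tsum hb hsum hsumg
      _ = UR * (1 - γ)⁻¹ := by rw [tsum_mul_left, tsum_geometric_of_lt_one hγ0.le hγ1]
      _ = UR / (1 - γ) := (div_eq_mul_inv _ _).symm
  -- basic objects
  set S : ℕ → Ω → EuclideanSpace ℝ (Fin d) := fun t ω => ∑ τ ∈ Finset.range (t + 1), Y τ ω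
    with hSdef
  set χ : ℕ → Ω → ℝ := fun t ω => if t ≤ T ω then (1:ℝ) else 0 with hχdef
  have hSm : ∀ t, Measurable (S t) := fun t =>
    Finset.measurable_sum _ (fun τ _ => hYm τ)
  have hSi : ∀ t, Integrable (S t) P := fun t =>
    integrable_finset_sum _ (fun τ _ => hYint τ)
  have hSnorm : ∀ t : ℕ, ∫ ω, ‖S t ω‖ ∂P ≤ ((t:ℝ) + 1) * CY := by
    intro t
    calc ∫ ω, ‖S t ω‖ ∂P ≤ ∫ ω, ∑ τ ∈ Finset.range (t + 1), ‖Y τ ω‖ ∂P :=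
          integral_mono (hSi t).norm (integrable_finset_sum _ fun τ _ => (hYint τ).norm)
            (fun ω => norm_sum_le _ _)
      _ = ∑ τ ∈ Finset.range (t + 1), ∫ ω, ‖Y τ ω‖ ∂P :=
          integral_finset_sum _ (fun τ _ => (hYint τ).norm)
      _ ≤ ∑ τ ∈ Finset.range (t + 1), CY := Finset.sum_le_sum (fun τ _ => hYb τ)
      _ = ((t:ℝ) + 1) * CY := by
          rw [Finset.sum_const, Finset.card_range, nsmul_eq_mul]; push_cast; ring
  have hAt : ∀ t : ℕ, MeasurableSet {ω | t ≤ T ω} := fun t => hT MeasurableSet.of_discrete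
  have hχm : ∀ t, Measurable (χ t) := fun t =>
    Measurable.ite (hAt t) measurable_const measurable_const
  have hχ01 : ∀ t ω, 0 ≤ χ t ω ∧ χ t ω ≤ 1 := by
    intro t ω; by_cases h : t ≤ T ω <;> simp [hχdef, h]
  have hχint : ∀ t, Integrable (χ t) P := fun t =>
    (integrable_const (1:ℝ)).mono' (hχm t).aestronglyMeasurable
      (ae_of_all P fun ω => by
        rw [Real.norm_eq_abs, abs_of_nonneg (hχ01 t ω).1]; exact (hχ01 t ω).2)
  -- distribution of T
  have hPT : ∀ t : ℕ, P {ω | t ≤ T ω} = ENNReal.ofReal (s ^ t) := by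
    intro t
    have hdecomp : {ω | t ≤ T ω} = ⋃ k : ℕ, {ω | T ω = t + k} := by
      ext ω
      simp only [Set.mem_setOf_eq, Set.mem_iUnion]
      constructor
      · intro h; exact ⟨T ω - t, by omega⟩
      · rintro ⟨k, hk⟩; omega
    have hdisj : Pairwise (Function.onFun Disjoint fun k : ℕ => {ω | T ω = t + k}) := by
      intro i j hij
      simp only [Function.onFun, Set.disjoint_left]
      intro ω h1 h2
      simp only [Set.mem_setOf_eq] at h1 h2
      omega
    rw [hdecomp, measure_iUnion hdisj (fun k => hT (measurableSet_singleton (t + k)))]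
    have h1 : ∀ k : ℕ, P {ω | T ω = t + k} = ENNReal.ofReal (((1 - s) * s ^ t) * s ^ k) := by
      intro k; rw [hTdist (t + k)]; congr 1; rw [pow_add]; ring
    have hnn : ∀ k : ℕ, 0 ≤ ((1 - s) * s ^ t) * s ^ k := fun k =>
      mul_nonneg (mul_nonneg (by linarith) (pow_nonneg hs0.le _)) (pow_nonneg hs0.le _)
    have hsum : Summable (fun k : ℕ => ((1 - s) * s ^ t) * s ^ k) :=
      (summable_geometric_of_lt_one hs0.le hs1).mul_left _
    calc ∑' k, P {ω | T ω = t + k}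
        = ∑' k, ENNReal.ofReal (((1 - s) * s ^ t) * s ^ k) := tsum_congr h1
      _ = ENNReal.ofReal (∑' k, ((1 - s) * s ^ t) * s ^ k) :=
          (ENNReal.ofReal_tsum_of_nonneg hnn hsum).symm
      _ = ENNReal.ofReal (s ^ t) := by
          rw [tsum_mul_left, tsum_geometric_of_lt_one hs0.le hs1]
          congr 1
          rw [mul_comm (1 - s) (s ^ t), mul_assoc, mul_inv_cancel₀ (by linarith : (1:ℝ) - s ≠ 0),
            mul_one]
  have hχval : ∀ t : ℕ, ∫ ω, χ t ω ∂P = s ^ t := by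
    intro t
    have hind : χ t = Set.indicator {ω | t ≤ T ω} (fun _ => (1:ℝ)) := by
      funext ω; by_cases h : t ≤ T ω <;> simp [hχdef, Set.indicator, h]
    rw [hind, integral_indicator_const _ (hAt t), measureReal_def, hPT t, smul_eq_mul, mul_one,
      ENNReal.toReal_ofReal (pow_nonneg hs0.le t)]
  -- measurability w.r.t. the sub-σ-algebras
  have hTc : Measurable[MeasurableSpace.comap T inferInstance] T :=
    Measurable.of_comap_le le_rfl
  have hχc : ∀ t, Measurable[MeasurableSpace.comap T inferInstance] (χ t) := by
    intro t
    have : χ t = (fun k : ℕ => if t ≤ k then (1:ℝ) else 0) ∘ T := rfl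
    rw [this]
    exact Measurable.comp Measurable.of_discrete hTc
  have hRc : ∀ t, Measurable[⨆ t : ℕ, (MeasurableSpace.comap (R t) inferInstance ⊔
      MeasurableSpace.comap (Y t) inferInstance)] (R t) := fun t =>
    Measurable.of_comap_le (le_trans le_sup_left (le_iSup
      (fun t : ℕ => (MeasurableSpace.comap (R t) inferInstance ⊔
        MeasurableSpace.comap (Y t) inferInstance)) t))
  have hYc : ∀ t, Measurable[⨆ t : ℕ, (MeasurableSpace.comap (R t) inferInstance ⊔
      MeasurableSpace.comap (Y t) inferInstance)] (Y t) := fun t =>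
    Measurable.of_comap_le (le_trans le_sup_right (le_iSup
      (fun t : ℕ => (MeasurableSpace.comap (R t) inferInstance ⊔
        MeasurableSpace.comap (Y t) inferInstance)) t))
  have hSc : ∀ t, Measurable[⨆ t : ℕ, (MeasurableSpace.comap (R t) inferInstance ⊔
      MeasurableSpace.comap (Y t) inferInstance)] (S t) := fun t =>
    Finset.measurable_sum _ (fun τ _ => hYc τ)
  -- the summands of the estimator
  set G : ℕ → Ω → EuclideanSpace ℝ (Fin d) := fun t ω => (s ^ t * R t ω) • S t ω with hGdef
  set F : ℕ → Ω → EuclideanSpace ℝ (Fin d) := fun t ω => χ t ω • G t ω with hFdef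
  have hGm : ∀ t, Measurable (G t) := fun t => (measurable_const.mul (hRm t)).smul (hSm t)
  have hFm : ∀ t, Measurable (F t) := fun t => (hχm t).smul (hGm t)
  have hGc : ∀ t, Measurable[⨆ t : ℕ, (MeasurableSpace.comap (R t) inferInstance ⊔
      MeasurableSpace.comap (Y t) inferInstance)] (G t) := fun t => by
    letI m' : MeasurableSpace Ω := ⨆ t : ℕ, (MeasurableSpace.comap (R t) inferInstance ⊔
      MeasurableSpace.comap (Y t) inferInstance)
    exact ((hRc t).const_mul (s ^ t)).smul (hSc t)
  have hGi : ∀ t, Integrable (G t) P := by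
    intro t
    refine Integrable.mono' ((hSi t).norm.const_mul (s ^ t * UR)) (hGm t).aestronglyMeasurable ?_
    filter_upwards [hRb t] with ω h
    rw [hGdef]
    simp only [norm_smul, Real.norm_eq_abs, abs_mul, abs_pow, abs_of_pos hs0]
    have h1 : s ^ t * |R t ω| ≤ s ^ t * UR :=
      mul_le_mul_of_nonneg_left h (pow_nonneg hs0.le t)
    exact mul_le_mul_of_nonneg_right h1 (norm_nonneg _)
  have hFi : ∀ t, Integrable (F t) P := by
    intro t
    refine Integrable.mono' (hGi t).norm (hFm t).aestronglyMeasurable ?_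
    refine ae_of_all P fun ω => ?_
    rw [hFdef]
    simp only [norm_smul, Real.norm_eq_abs, abs_of_nonneg (hχ01 t ω).1]
    exact mul_le_of_le_one_left (norm_nonneg _) (hχ01 t ω).2
  -- independence facts
  have hSnc : ∀ t, Measurable[⨆ t : ℕ, (MeasurableSpace.comap (R t) inferInstance ⊔
      MeasurableSpace.comap (Y t) inferInstance)] (fun ω => ‖S t ω‖) := fun t => by
    letI m' : MeasurableSpace Ω := ⨆ t : ℕ, (MeasurableSpace.comap (R t) inferInstance ⊔
      MeasurableSpace.comap (Y t) inferInstance)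
    exact (hSc t).norm
  have hIndχS : ∀ t, IndepFun (χ t) (fun ω => ‖S t ω‖) P := fun t =>
    aux_indepFun hindep (hχc t) (hSnc t)
  have hIndχG : ∀ t, IndepFun (χ t) (G t) P := fun t =>
    aux_indepFun hindep (hχc t) (hGc t)
  -- bound on ∫ ‖F t‖
  have hFnorm : ∀ t : ℕ, ∫ ω, ‖F t ω‖ ∂P ≤ γ ^ t * (UR * (((t:ℝ) + 1) * CY)) := by
    intro t
    have h1 : Integrable (fun ω => χ t ω * ‖S t ω‖) P :=
      (hSi t).norm.bdd_mul (hχm t).aestronglyMeasurable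
        (ae_of_all P fun ω => by
          rw [Real.norm_eq_abs, abs_of_nonneg (hχ01 t ω).1]; exact (hχ01 t ω).2)
    have h2 : ∀ᵐ ω ∂P, ‖F t ω‖ ≤ (s ^ t * UR) * (χ t ω * ‖S t ω‖) := by
      filter_upwards [hRb t] with ω h
      rw [hFdef, hGdef]
      simp only [norm_smul, Real.norm_eq_abs, abs_mul, abs_pow, abs_of_pos hs0,
        abs_of_nonneg (hχ01 t ω).1]
      have hS0 : (0:ℝ) ≤ ‖S t ω‖ := norm_nonneg _
      have hst0 : (0:ℝ) ≤ s ^ t := pow_nonneg hs0.le t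
      by_cases hc : t ≤ T ω
      · have hχ1 : χ t ω = 1 := by simp [hχdef, hc]
        rw [hχ1]
        have := mul_le_mul_of_nonneg_right (mul_le_mul_of_nonneg_left h hst0) hS0
        nlinarith
      · have hχ0 : χ t ω = 0 := by simp [hχdef, hc]
        rw [hχ0]
        simp
    calc ∫ ω, ‖F t ω‖ ∂P ≤ ∫ ω, (s ^ t * UR) * (χ t ω * ‖S t ω‖) ∂P :=
          integral_mono_of_nonneg (ae_of_all P fun ω => norm_nonneg _) (h1.const_mul _) h2
      _ = (s ^ t * UR) * ∫ ω, χ t ω * ‖S t ω‖ ∂P := integral_const_mul _ _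
      _ = (s ^ t * UR) * ((∫ ω, χ t ω ∂P) * ∫ ω, ‖S t ω‖ ∂P) := by
          congr 1
          exact (hIndχS t).integral_fun_mul_eq_mul_integral (hχint t).aestronglyMeasurable (hSi t).norm.aestronglyMeasurable
      _ = (s ^ t * UR) * (s ^ t * ∫ ω, ‖S t ω‖ ∂P) := by rw [hχval t]
      _ ≤ (s ^ t * UR) * (s ^ t * (((t:ℝ) + 1) * CY)) := by
          have h3 : s ^ t * ∫ ω, ‖S t ω‖ ∂P ≤ s ^ t * (((t:ℝ) + 1) * CY) :=
            mul_le_mul_of_nonneg_left (hSnorm t) (pow_nonneg hs0.le t)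
          exact mul_le_mul_of_nonneg_left h3
            (mul_nonneg (pow_nonneg hs0.le t) hUR)
      _ = γ ^ t * (UR * (((t:ℝ) + 1) * CY)) := by rw [← hst t]; ring
  have hbnn : ∀ t : ℕ, 0 ≤ γ ^ t * (UR * (((t:ℝ) + 1) * CY)) := by
    intro t
    have : ((0:ℝ)) ≤ (t:ℝ) + 1 := by positivity
    positivity
  have hbsum : Summable (fun t : ℕ => γ ^ t * (UR * (((t:ℝ) + 1) * CY))) :=
    (hgeo1.mul_left (UR * CY)).congr (fun t => by ring)
  have hFsum : Summable (fun t => ∫ ω, ‖F t ω‖ ∂P) :=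
    Summable.of_nonneg_of_le (fun t => integral_nonneg fun ω => norm_nonneg _) hFnorm hbsum
  -- pointwise identity for the estimator
  have hg_eq : ∀ ω, (∑ t ∈ Finset.range (T ω + 1), (s ^ t * R t ω) • S t ω)
      = ∑' t, F t ω := by
    intro ω
    rw [tsum_eq_sum (s := Finset.range (T ω + 1)) ?_]
    · refine (Finset.sum_congr rfl fun t ht => ?_)
      have h : t ≤ T ω := by
        simp only [Finset.mem_range, Nat.lt_succ_iff] at ht; exact ht
      rw [hFdef]; simp [hχdef, h, hGdef]
    · intro t ht
      have h : ¬ t ≤ T ω := by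
        simp only [Finset.mem_range, Nat.lt_succ_iff] at ht; exact ht
      rw [hFdef]; simp [hχdef, h]
  -- measurability and integrability of the estimator (part (i))
  have hgm : Measurable (fun ω => ∑ t ∈ Finset.range (T ω + 1), (s ^ t * R t ω) • S t ω) := by
    have h1 : Measurable (fun p : Ω × ℕ =>
        ∑ t ∈ Finset.range (p.2 + 1), (s ^ t * R t p.1) • S t p.1) :=
      measurable_from_prod_countable_left fun k => by
        show Measurable fun x : Ω => ∑ t ∈ Finset.range (k + 1), (s ^ t * R t x) • S t x
        exact Finset.measurable_sum _ fun t _ => ((hRm t).const_mul (s ^ t)).smul (hSm t)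
    exact h1.comp (measurable_id.prodMk hT)
  have hgint : Integrable (fun ω => ∑ t ∈ Finset.range (T ω + 1),
      (s ^ t * R t ω) • S t ω) P := by
    refine ⟨hgm.aestronglyMeasurable, ?_⟩
    show (∫⁻ ω, (‖∑ t ∈ Finset.range (T ω + 1), (s ^ t * R t ω) • S t ω‖₊ : ENNReal) ∂P) < ⊤
    calc ∫⁻ ω, (‖∑ t ∈ Finset.range (T ω + 1), (s ^ t * R t ω) • S t ω‖₊ : ENNReal) ∂P
        ≤ ∫⁻ ω, ∑' t, (‖F t ω‖₊ : ENNReal) ∂P := by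
          refine lintegral_mono fun ω => ?_
          calc (‖∑ t ∈ Finset.range (T ω + 1), (s ^ t * R t ω) • S t ω‖₊ : ENNReal)
              = ‖∑ t ∈ Finset.range (T ω + 1), F t ω‖₊ := by
                congr 1
                rw [hg_eq ω, tsum_eq_sum (s := Finset.range (T ω + 1))]
                intro t ht
                have h : ¬ t ≤ T ω := by
                  simp only [Finset.mem_range, Nat.lt_succ_iff] at ht; exact ht
                rw [hFdef]; simp [hχdef, h]
            _ ≤ ∑ t ∈ Finset.range (T ω + 1), (‖F t ω‖₊ : ENNReal) := by
                rw [← ENNReal.coe_finset_sum]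
                exact ENNReal.coe_le_coe.mpr (nnnorm_sum_le _ _)
            _ ≤ ∑' t, (‖F t ω‖₊ : ENNReal) := ENNReal.sum_le_tsum _
      _ = ∑' t, ∫⁻ ω, (‖F t ω‖₊ : ENNReal) ∂P :=
          lintegral_tsum (fun t => (hFm t).aestronglyMeasurable.enorm)
      _ = ∑' t, ENNReal.ofReal (∫ ω, ‖F t ω‖ ∂P) := by
          refine tsum_congr fun t => ?_
          exact (ofReal_integral_norm_eq_lintegral_enorm (hFi t)).symm
      _ ≤ ∑' t : ℕ, ENNReal.ofReal (γ ^ t * (UR * (((t:ℝ) + 1) * CY))) :=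
          ENNReal.tsum_le_tsum fun t => ENNReal.ofReal_le_ofReal (hFnorm t)
      _ = ENNReal.ofReal (∑' t : ℕ, γ ^ t * (UR * (((t:ℝ) + 1) * CY))) :=
          (ENNReal.ofReal_tsum_of_nonneg hbnn hbsum).symm
      _ < ⊤ := ENNReal.ofReal_lt_top
  -- integral of each summand
  set v : ℕ → ℕ → EuclideanSpace ℝ (Fin d) := fun t τ => ∫ ω, R t ω • Y τ ω ∂P with hvdef
  have hRYint : ∀ t τ, Integrable (fun ω => R t ω • Y τ ω) P := by
    intro t τ
    refine Integrable.mono' ((hYint τ).norm.const_mul UR)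
      ((hRm t).smul (hYm τ)).aestronglyMeasurable ?_
    filter_upwards [hRb t] with ω h
    rw [norm_smul, Real.norm_eq_abs]
    exact mul_le_mul_of_nonneg_right h (norm_nonneg _)
  have hvb : ∀ t τ, ‖v t τ‖ ≤ UR * CY := by
    intro t τ
    calc ‖v t τ‖ ≤ ∫ ω, ‖R t ω • Y τ ω‖ ∂P := norm_integral_le_integral_norm _
      _ ≤ ∫ ω, UR * ‖Y τ ω‖ ∂P := by
          refine integral_mono_of_nonneg (ae_of_all P fun ω => norm_nonneg _)
            ((hYint τ).norm.const_mul UR) ?_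
          filter_upwards [hRb t] with ω h
          rw [norm_smul, Real.norm_eq_abs]
          exact mul_le_mul_of_nonneg_right h (norm_nonneg _)
      _ = UR * ∫ ω, ‖Y τ ω‖ ∂P := integral_const_mul _ _
      _ ≤ UR * CY := mul_le_mul_of_nonneg_left (hYb τ) hUR
  have hFt : ∀ t : ℕ, ∫ ω, F t ω ∂P = γ ^ t • ∑ τ ∈ Finset.range (t + 1), v t τ := by
    intro t
    have e1 : ∫ ω, F t ω ∂P = (∫ ω, χ t ω ∂P) • ∫ ω, G t ω ∂P :=
      aux_integral_smul_indep (hIndχG t) (hχint t) (hGi t) (hFi t)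
    have e2 : ∫ ω, G t ω ∂P = s ^ t • ∑ τ ∈ Finset.range (t + 1), v t τ := by
      have hpt : ∀ ω, G t ω = s ^ t • ∑ τ ∈ Finset.range (t + 1), R t ω • Y τ ω := by
        intro ω
        rw [hGdef]
        simp only
        rw [mul_smul, hSdef]
        simp only
        rw [Finset.smul_sum]
      rw [integral_congr_ae (ae_of_all P hpt), integral_smul]
      congr 1
      rw [integral_finset_sum _ (fun τ _ => hRYint t τ)]
    rw [e1, e2, hχval t, smul_smul, hst t]
  -- the double array
  set w : ℕ × ℕ → EuclideanSpace ℝ (Fin d) :=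
    fun p => if p.2 ≤ p.1 then γ ^ p.1 • v p.1 p.2 else 0 with hwdef
  set b : ℕ × ℕ → ℝ := fun p => if p.2 ≤ p.1 then γ ^ p.1 * (UR * CY) else 0 with hbdef
  have hb0 : ∀ p : ℕ × ℕ, 0 ≤ b p := by
    intro p
    rw [hbdef]
    dsimp only
    split
    · have : (0:ℝ) ≤ γ ^ p.1 := pow_nonneg hγ0.le _
      positivity
    · exact le_refl 0
  have hwb : ∀ p : ℕ × ℕ, ‖w p‖ ≤ b p := by
    intro p
    rw [hwdef, hbdef]
    dsimp only
    split
    · rw [norm_smul, Real.norm_eq_abs, abs_of_pos (pow_pos hγ0 _)]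
      exact mul_le_mul_of_nonneg_left (hvb _ _) (pow_nonneg hγ0.le _)
    · simp
  have hbfib : ∀ t : ℕ, Summable (fun τ => b (t, τ)) := by
    intro t
    refine summable_of_ne_finset_zero (s := Finset.range (t + 1)) (fun τ hτ => ?_)
    rw [hbdef]
    refine if_neg ?_
    simp only [Finset.mem_range, Nat.lt_succ_iff] at hτ
    omega
  have hbout : ∀ t : ℕ, (∑' τ, b (t, τ)) = ((t:ℝ) + 1) * (γ ^ t * (UR * CY)) := by
    intro t
    rw [tsum_eq_sum (s := Finset.range (t + 1)) (fun τ hτ => by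
      rw [hbdef]
      refine if_neg ?_
      simp only [Finset.mem_range, Nat.lt_succ_iff] at hτ
      omega)]
    have : ∀ τ ∈ Finset.range (t + 1), b (t, τ) = γ ^ t * (UR * CY) := by
      intro τ hτ
      rw [hbdef]
      refine if_pos ?_
      simp only [Finset.mem_range, Nat.lt_succ_iff] at hτ
      omega
    rw [Finset.sum_congr rfl this, Finset.sum_const, Finset.card_range, nsmul_eq_mul]
    push_cast
    ring
  have hbsum2 : Summable b := by
    refine (summable_prod_of_nonneg hb0).mpr ⟨hbfib, ?_⟩
    refine Summable.congr ?_ (fun t => (hbout t).symm)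
    exact (hgeo1.mul_left (UR * CY)).congr (fun t => by ring)
  have hwsum : Summable w := Summable.of_norm_bounded hbsum2 hwb
  have hfib1 : ∀ t : ℕ, Summable (fun τ => w (t, τ)) := by
    intro t
    refine summable_of_ne_finset_zero (s := Finset.range (t + 1)) (fun τ hτ => ?_)
    rw [hwdef]
    refine if_neg ?_
    simp only [Finset.mem_range, Nat.lt_succ_iff] at hτ
    omega
  have hfib2 : ∀ τ : ℕ, Summable (fun t => w (t, τ)) := by
    intro τ
    exact Summable.of_norm_bounded (by
      refine Summable.of_nonneg_of_le (fun t => hb0 (t, τ)) (fun t => ?_)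
        (hgeo.mul_right (UR * CY))
      rw [hbdef]
      dsimp only
      split
      · exact le_refl _
      · have : (0:ℝ) ≤ γ ^ t := pow_nonneg hγ0.le _
        positivity) (fun t => hwb (t, τ))
  have hFtsum : ∀ t : ℕ, ∫ ω, F t ω ∂P = ∑' τ, w (t, τ) := by
    intro t
    rw [hFt t]
    calc γ ^ t • ∑ τ ∈ Finset.range (t + 1), v t τ
        = ∑ τ ∈ Finset.range (t + 1), γ ^ t • v t τ := Finset.smul_sum
      _ = ∑ τ ∈ Finset.range (t + 1), w (t, τ) := by
          refine Finset.sum_congr rfl (fun τ hτ => ?_)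
          rw [hwdef]
          refine (if_pos ?_).symm
          simp only [Finset.mem_range, Nat.lt_succ_iff] at hτ
          omega
      _ = ∑' τ, w (t, τ) := by
          refine (tsum_eq_sum (fun τ hτ => ?_)).symm
          rw [hwdef]
          refine if_neg ?_
          simp only [Finset.mem_range, Nat.lt_succ_iff] at hτ
          omega
  have hswap : ∑' t, ∑' τ, w (t, τ) = ∑' τ, ∑' t, w (t, τ) := by
    have huncurry : Summable (Function.uncurry (fun t τ => w (t, τ))) :=
      hwsum.congr (fun p => rfl)
    exact (Summable.tsum_comm' huncurry hfib1 hfib2).symm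
  -- summands for the Q-series
  have hQint : ∀ τ n : ℕ, Integrable (fun ω => (γ ^ n * R (τ + n) ω) • Y τ ω) P := by
    intro τ n
    refine Integrable.mono' ((hYint τ).norm.const_mul (γ ^ n * UR))
      (((hRm (τ + n)).const_mul (γ ^ n)).smul (hYm τ)).aestronglyMeasurable ?_
    filter_upwards [hRb (τ + n)] with ω h
    rw [norm_smul, Real.norm_eq_abs, abs_mul, abs_of_pos (pow_pos hγ0 n)]
    exact mul_le_mul_of_nonneg_right
      (mul_le_mul_of_nonneg_left h (pow_nonneg hγ0.le n)) (norm_nonneg _)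
  have hQnorm : ∀ τ n : ℕ, ∫ ω, ‖(γ ^ n * R (τ + n) ω) • Y τ ω‖ ∂P ≤ γ ^ n * (UR * CY) := by
    intro τ n
    calc ∫ ω, ‖(γ ^ n * R (τ + n) ω) • Y τ ω‖ ∂P
        ≤ ∫ ω, (γ ^ n * UR) * ‖Y τ ω‖ ∂P := by
          refine integral_mono_of_nonneg (ae_of_all P fun ω => norm_nonneg _)
            ((hYint τ).norm.const_mul _) ?_
          filter_upwards [hRb (τ + n)] with ω h
          rw [norm_smul, Real.norm_eq_abs, abs_mul, abs_of_pos (pow_pos hγ0 n)]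
          exact mul_le_mul_of_nonneg_right
            (mul_le_mul_of_nonneg_left h (pow_nonneg hγ0.le n)) (norm_nonneg _)
      _ = (γ ^ n * UR) * ∫ ω, ‖Y τ ω‖ ∂P := integral_const_mul _ _
      _ ≤ (γ ^ n * UR) * CY :=
          mul_le_mul_of_nonneg_left (hYb τ) (mul_nonneg (pow_nonneg hγ0.le n) hUR)
      _ = γ ^ n * (UR * CY) := by ring
  have hQsum : ∀ τ : ℕ, Summable (fun n => ∫ ω, ‖(γ ^ n * R (τ + n) ω) • Y τ ω‖ ∂P) := by
    intro τ
    exact Summable.of_nonneg_of_le (fun n => integral_nonneg fun ω => norm_nonneg _)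
      (hQnorm τ) (hgeo.mul_right (UR * CY))
  have hQeq : ∀ τ : ℕ, (∑' t, w (t, τ))
      = γ ^ τ • ∫ ω, (∑' n : ℕ, γ ^ n * R (τ + n) ω) • Y τ ω ∂P := by
    intro τ
    have hi : Function.Injective (fun n : ℕ => τ + n) := fun a b h => Nat.add_left_cancel h
    have hsupp : Function.support (fun t => w (t, τ)) ⊆ Set.range (fun n : ℕ => τ + n) := by
      intro t ht
      have hτt : τ ≤ t := by
        by_contra hc
        exact ht (by rw [hwdef]; exact if_neg hc)
      exact ⟨t - τ, by show τ + (t - τ) = t; omega⟩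
    calc (∑' t, w (t, τ)) = ∑' n, w (τ + n, τ) := (hi.tsum_eq hsupp).symm
      _ = ∑' n, γ ^ τ • ∫ ω, (γ ^ n * R (τ + n) ω) • Y τ ω ∂P := by
          refine tsum_congr fun n => ?_
          rw [hwdef]
          simp only
          rw [if_pos (Nat.le_add_right τ n), hvdef]
          simp only
          rw [pow_add, mul_smul]
          congr 1
          rw [← integral_smul]
          refine integral_congr_ae (ae_of_all P fun ω => ?_)
          simp only [mul_smul]
      _ = γ ^ τ • ∑' n, ∫ ω, (γ ^ n * R (τ + n) ω) • Y τ ω ∂P := tsum_const_smul'' _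
      _ = γ ^ τ • ∫ ω, ∑' n, (γ ^ n * R (τ + n) ω) • Y τ ω ∂P := by
          rw [integral_tsum_of_summable_integral_norm (fun n => hQint τ n) (hQsum τ)]
      _ = γ ^ τ • ∫ ω, (∑' n : ℕ, γ ^ n * R (τ + n) ω) • Y τ ω ∂P := by
          congr 1
          refine integral_congr_ae ?_
          filter_upwards [hpart2 τ] with ω hω
          exact Summable.tsum_smul_const hω.1.of_abs (Y τ ω)
  -- part (iii)
  have hQb2 : ∀ τ : ℕ, ‖∫ ω, (∑' n : ℕ, γ ^ n * R (τ + n) ω) • Y τ ω ∂P‖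
      ≤ UR / (1 - γ) * CY := by
    intro τ
    calc ‖∫ ω, (∑' n : ℕ, γ ^ n * R (τ + n) ω) • Y τ ω ∂P‖
        ≤ ∫ ω, ‖(∑' n : ℕ, γ ^ n * R (τ + n) ω) • Y τ ω‖ ∂P :=
          norm_integral_le_integral_norm _
      _ ≤ ∫ ω, (UR / (1 - γ)) * ‖Y τ ω‖ ∂P := by
          refine integral_mono_of_nonneg (ae_of_all P fun ω => norm_nonneg _)
            ((hYint τ).norm.const_mul _) ?_
          filter_upwards [hpart2 τ] with ω hω
          rw [norm_smul, Real.norm_eq_abs]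
          exact mul_le_mul_of_nonneg_right hω.2 (norm_nonneg _)
      _ = (UR / (1 - γ)) * ∫ ω, ‖Y τ ω‖ ∂P := integral_const_mul _ _
      _ ≤ UR / (1 - γ) * CY :=
          mul_le_mul_of_nonneg_left (hYb τ) (div_nonneg hUR h1γ.le)
  have hpart3 : Summable (fun τ : ℕ =>
      ‖γ ^ τ • ∫ ω, (∑' n : ℕ, γ ^ n * R (τ + n) ω) • Y τ ω ∂P‖) := by
    refine Summable.of_nonneg_of_le (fun τ => norm_nonneg _) (fun τ => ?_)
      (hgeo.mul_right (UR / (1 - γ) * CY))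
    rw [norm_smul, Real.norm_eq_abs, abs_of_pos (pow_pos hγ0 τ)]
    exact mul_le_mul_of_nonneg_left (hQb2 τ) (pow_nonneg hγ0.le τ)
  -- conclusion
  refine ⟨hgint, hpart2, hpart3, ?_⟩
  calc ∫ ω, ∑ t ∈ Finset.range (T ω + 1), (s ^ t * R t ω) • S t ω ∂P
      = ∫ ω, ∑' t, F t ω ∂P := integral_congr_ae (ae_of_all P hg_eq)
    _ = ∑' t, ∫ ω, F t ω ∂P :=
        (integral_tsum_of_summable_integral_norm hFi hFsum).symm
    _ = ∑' t, ∑' τ, w (t, τ) := tsum_congr hFtsum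
    _ = ∑' τ, ∑' t, w (t, τ) := hswap
    _ = ∑' τ : ℕ, γ ^ τ • ∫ ω, (∑' n : ℕ, γ ^ n * R (τ + n) ω) • Y τ ω ∂P :=
        tsum_congr hQeq
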